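/- For all natural numbers n > m, the difference w(n) − w(m) is not equal to a, not equal to b, and not equal to a + b. -/
import Mathlib


/-- `w a b δ n = n + a⌊n/a⌋ + b⌊n/δ⌋`. -/
def w (a b δ n : ℕ) : ℕ := n + a * (n / a) + b * (n / δ)

lemma aux_anticoll (a δ d u v : ℕ) (ha : 0 < a) (hlt : a < δ) (hlt2 : δ < 2 * a)
    (hd : 1 ≤ d) (h1 : a ≤ d → 1 ≤ u) (h2 : δ ≤ d → 1 ≤ v)
    (h3 : a * u ≤ d + a) :
    d + a * u + (a + δ) * v ≠ a ∧ d + a * u + (a + δ) * v ≠ a + δ ∧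
      d + a * u + (a + δ) * v ≠ a + (a + δ) := by
  have hub : ∀ c : ℕ, d + a * u + (a + δ) * v = c → c ≤ 2 * a + δ → u ≤ 3 ∧ v ≤ 1 := by
    intro c hc hcle
    have h5 : a * u ≤ c := hc ▸ Nat.le_trans (Nat.le_add_left _ d) (Nat.le_add_right _ _)
    have h6 : (a + δ) * v ≤ c := hc ▸ Nat.le_add_left _ _
    constructor
    · by_contra h
      push_neg at h
      have h4 : a * 4 ≤ a * u := Nat.mul_le_mul_left a (by omega)
      have := Nat.le_trans h4 (Nat.le_trans h5 hcle)
      omega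
    · by_contra h
      push_neg at h
      have h4 : (a + δ) * 2 ≤ (a + δ) * v := Nat.mul_le_mul_left _ (by omega)
      have := Nat.le_trans h4 (Nat.le_trans h6 hcle)
      omega
  refine ⟨?_, ?_, ?_⟩ <;> intro hc
  · obtain ⟨hu3, hv1⟩ := hub a hc (by omega)
    interval_cases u <;> interval_cases v <;> omega
  · obtain ⟨hu3, hv1⟩ := hub (a + δ) hc (by omega)
    interval_cases u <;> interval_cases v <;> omega
  · obtain ⟨hu3, hv1⟩ := hub (a + (a + δ)) hc (by omega)
    interval_cases u <;> interval_cases v <;> omega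

/-- Anti-collision: for all `n > m`, the difference `w n - w m` is not `a`, not `b`,
and not `a + b`. -/
theorem stmt_0 (a δ : ℕ) (ha : 0 < a) (hlt : a < δ) (hlt2 : δ < 2 * a)
    (hgcd : Nat.gcd a δ = 1) (b : ℕ) (hb : b = a + δ) :
    ∀ m n : ℕ, m < n →
      w a b δ n - w a b δ m ≠ a ∧
      w a b δ n - w a b δ m ≠ b ∧
      w a b δ n - w a b δ m ≠ a + b := by
  subst hb
  intro m n hmn
  have hδ : 0 < δ := ha.trans hlt
  have hmono1 : m / a ≤ n / a := Nat.div_le_div_right hmn.le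
  have hmono2 : m / δ ≤ n / δ := Nat.div_le_div_right hmn.le
  obtain ⟨u, hu⟩ := Nat.le.dest hmono1   -- hu : m/a + u = n/a
  obtain ⟨v, hv⟩ := Nat.le.dest hmono2   -- hv : m/δ + v = n/δ
  have G1 : a ≤ n - m → m / a + 1 ≤ n / a := by
    intro h
    calc m / a + 1 = (m + a) / a := (Nat.add_div_right m ha).symm
      _ ≤ n / a := Nat.div_le_div_right (by omega)
  have G2 : δ ≤ n - m → m / δ + 1 ≤ n / δ := by
    intro h
    calc m / δ + 1 = (m + δ) / δ := (Nat.add_div_right m hδ).symm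
      _ ≤ n / δ := Nat.div_le_div_right (by omega)
  have h1 : a ≤ n - m → 1 ≤ u := by
    intro h
    have h' := G1 h
    rw [← hu] at h'
    exact Nat.le_of_add_le_add_left h'
  have h2 : δ ≤ n - m → 1 ≤ v := by
    intro h
    have h' := G2 h
    rw [← hv] at h'
    exact Nat.le_of_add_le_add_left h'
  have G3 : a * (n / a) ≤ n := by
    calc a * (n / a) = n / a * a := Nat.mul_comm _ _
      _ ≤ n := Nat.div_mul_le_self n a
  have G4 : m < a * (m / a) + a := by
    have d1 := Nat.div_add_mod m a
    have d2 := Nat.mod_lt m ha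
    linarith
  have h3 : a * u ≤ (n - m) + a := by
    have e1 : a * (m / a) + a * u = a * (n / a) := by rw [← hu, Nat.mul_add]
    have hs : m + (n - m) = n := by omega
    linarith
  have hw : w a (a + δ) δ n - w a (a + δ) δ m = (n - m) + a * u + (a + δ) * v := by
    have e1 : a * (n / a) = a * (m / a) + a * u := by rw [← hu, Nat.mul_add]
    have e2 : (a + δ) * (n / δ) = (a + δ) * (m / δ) + (a + δ) * v := by
      rw [← hv, Nat.mul_add]
    simp only [w, e1, e2]
    generalize a * (m / a) = X
    generalize (a + δ) * (m / δ) = Y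
    generalize a * u = U
    generalize (a + δ) * v = V
    omega
  rw [hw]
  exact aux_anticoll a δ (n - m) u v ha hlt hlt2 (by omega) h1 h2 h3
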